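/- Perturbation bounds at y* for the two component losses (from the proof of Theorem 1): In the perturbation setup, ℓ_L(p,y*) − ℓ_L(q,y*) = log((p y* + ε)/(p y*)) > ε/(p y* + ε), and ℓ_H(p,y*) − ℓ_H(q,y*) > 2ε/(p y* + ε). -/

import Mathlib

open Real

/-- The maximum of `p` over all labels different from `y`
(as a supremum, which for a finite nonempty label set equals the maximum). -/
noncomputable def maxNe {Y : Type*} (p : Y → ℝ) (y : Y) : ℝ :=
  sSup {x : ℝ | ∃ y' : Y, y' ≠ y ∧ p y' = x}

/-- The multiclass hinge loss of a (strictly positive) distribution `p` at label `y`. -/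
noncomputable def hingeLoss {Y : Type*} (p : Y → ℝ) (y : Y) : ℝ :=
  max 0 (1 - Real.log (p y / maxNe p y))

/-- The log loss of a (strictly positive) distribution `p` at label `y`. -/
noncomputable def logLoss {Y : Type*} (p : Y → ℝ) (y : Y) : ℝ :=
  - Real.log (p y)

/-- The hybrid loss with mixture parameter `α`. -/
noncomputable def hybridLoss {Y : Type*} (α : ℝ) (p : Y → ℝ) (y : Y) : ℝ :=
  α * logLoss p y + (1 - α) * hingeLoss p y

/-- The conditional risk `L_α(p, D) = ∑ y, D y * ℓ_α(p, y)`. -/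
noncomputable def condRisk {Y : Type*} [Fintype Y] (α : ℝ) (p D : Y → ℝ) : ℝ :=
  ∑ y, D y * hybridLoss α p y

/-- `D` is a distribution over `Y`. -/
def IsDist {Y : Type*} [Fintype Y] (D : Y → ℝ) : Prop :=
  (∀ y, 0 ≤ D y) ∧ ∑ y, D y = 1

/-- `p` is a strictly positive distribution over `Y`. -/
def IsPosDist {Y : Type*} [Fintype Y] (p : Y → ℝ) : Prop :=
  (∀ y, 0 < p y) ∧ ∑ y, p y = 1


lemma maxNe_eq' {Y : Type*} (p : Y → ℝ) (y t : Y) (ht : t ≠ y)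
    (hub : ∀ y', y' ≠ y → p y' ≤ p t) : maxNe p y = p t := by
  apply IsGreatest.csSup_eq
  constructor
  · exact ⟨t, ht, rfl⟩
  · rintro x ⟨y', hy', rfl⟩; exact hub y' hy'

lemma log_gt' (x : ℝ) (hx : 0 < x) (hne : x ≠ 1) : 1 - 1/x < Real.log x := by
  have h := Real.log_lt_sub_one_of_pos (x := 1/x) (by positivity)
    (by intro h; apply hne; rw [div_eq_one_iff_eq (ne_of_gt hx)] at h; linarith)
  rw [Real.log_div one_ne_zero (ne_of_gt hx), Real.log_one] at h
  linarith

/-- Perturbation bounds at y* for the two component losses. -/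
theorem perturbation_bounds_at_ystar {Y : Type*} [Fintype Y]
    (hcard : 1 < Fintype.card Y)
(p : Y → ℝ) (hp : IsPosDist p)
    (t ystar : Y) (hne : t ≠ ystar) (hpt : p t = p ystar)
    (hlt : ∀ y, y ≠ t → y ≠ ystar → p y < p t)
    (ε : ℝ) (hε0 : 0 < ε) (hεpt : ε < p t)
    (hεlt : ∀ y, y ≠ t → y ≠ ystar → p y < p t - ε)
    (q : Y → ℝ) (hqstar : q ystar = p ystar + ε) (hqt : q t = p t - ε)
    (hq : ∀ y, y ≠ t → y ≠ ystar → q y = p y) :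
    (logLoss p ystar - logLoss q ystar = Real.log ((p ystar + ε) / p ystar) ∧
      ε / (p ystar + ε) < Real.log ((p ystar + ε) / p ystar)) ∧
    2 * ε / (p ystar + ε) < hingeLoss p ystar - hingeLoss q ystar := by
  obtain ⟨hppos, _⟩ := hp
  set s := p ystar with hs
  have hspos : 0 < s := hppos ystar
  have hεs : ε < s := hpt ▸ hεpt
  have hqpos : 0 < s + ε := by linarith
  -- maxNe computations
  have hmp : maxNe p ystar = p t := by
    apply maxNe_eq' p ystar t hne
    intro y' hy'
    by_cases h : y' = t
    · simp [h]
    · exact (hlt y' h hy').le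
  have hmq : maxNe q ystar = q t := by
    apply maxNe_eq' q ystar t hne
    intro y' hy'
    by_cases h : y' = t
    · simp [h]
    · rw [hq y' h hy', hqt]; exact (hεlt y' h hy').le
  have hlog : logLoss p ystar - logLoss q ystar = Real.log ((s + ε) / s) := by
    rw [logLoss, logLoss, hqstar, Real.log_div (by positivity) (ne_of_gt hspos)]
    ring
  have hlogbound : ε / (s + ε) < Real.log ((s + ε) / s) := by
    have hx : (0:ℝ) < (s + ε) / s := by positivity
    have hne1 : (s + ε) / s ≠ 1 := by
      intro h
      rw [div_eq_one_iff_eq (ne_of_gt hspos)] at h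
      linarith
    have := log_gt' _ hx hne1
    have hinv : 1 - 1 / ((s + ε) / s) = ε / (s + ε) := by
      field_simp
      ring
    linarith [hinv ▸ this]
  refine ⟨⟨hlog, hlogbound⟩, ?_⟩
  -- hinge part
  have hHp : hingeLoss p ystar = 1 := by
    rw [hingeLoss, hmp, hpt, div_self (ne_of_gt hspos), Real.log_one]
    norm_num
  have hL : Real.log (q ystar / maxNe q ystar) = Real.log ((s + ε) / (s - ε)) := by
    rw [hmq, hqstar, hqt, hpt]
  set L := Real.log ((s + ε) / (s - ε)) with hLdef
  have hB : 2 * ε / (s + ε) < L := by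
    have hx : (0:ℝ) < (s + ε) / (s - ε) := by
      apply div_pos <;> linarith
    have hne1 : (s + ε) / (s - ε) ≠ 1 := by
      intro h
      rw [div_eq_one_iff_eq (by linarith : s - ε ≠ 0)] at h
      linarith
    have := log_gt' _ hx hne1
    have hinv : 1 - 1 / ((s + ε) / (s - ε)) = 2 * ε / (s + ε) := by
      rw [one_div_div]
      field_simp
      ring
    linarith [hinv ▸ this]
  have hB1 : 2 * ε / (s + ε) < 1 := by
    rw [div_lt_one hqpos]; linarith
  have hHq : hingeLoss q ystar = max 0 (1 - L) := by
    rw [hingeLoss, hL]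
  rw [hHp, hHq]
  have : max 0 (1 - L) < 1 - 2 * ε / (s + ε) := max_lt (by linarith) (by linarith)
  linarith
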